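/- Let (x, {p_i}) be a Lindahl equilibrium of a public goods market with n agents, budgets B_i > 0, and concave utilities u_i: ℝ^m_{≥0} → ℝ_{≥0} satisfying u_i(0) = 0 and u_i(x) > 0. Let y ≥ 0 be any allocation with Σ_j y_j ≤ Σ_i B_i and u_i(y) > 0 for all i. Then, writing 𝔅 = Σ_i B_i, the budget-weighted geometric means satisfy (Π_i u_i(x)^{B_i})^{1/𝔅} ≥ (1/e)^{1/e} · (Π_i u_i(y)^{B_i})^{1/𝔅}. -/

import Mathlib

theorem stmt16 {n m : ℕ} (u : Fin n → (Fin m → ℝ) → ℝ) (B : Fin n → ℝ)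
    (hB : ∀ i, 0 < B i)
    (hconc : ∀ i, ConcaveOn ℝ {x : Fin m → ℝ | 0 ≤ x} (u i))
    (hu0 : ∀ i, u i 0 = 0)
    (x : Fin m → ℝ) (hx : 0 ≤ x) (hux : ∀ i, 0 < u i x)
    (p : Fin n → Fin m → ℝ) (hp : ∀ i, 0 ≤ p i)
    (haff : ∀ i, ∑ j, p i j * x j ≤ B i)
    (hopt : ∀ i, ∀ z : Fin m → ℝ, 0 ≤ z → ∑ j, p i j * z j ≤ B i → u i z ≤ u i x)
    (hprice : ∀ j, ∑ i, p i j ≤ 1)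
    (hprice' : ∀ j, 0 < x j → ∑ i, p i j = 1)
    (y : Fin m → ℝ) (hy : 0 ≤ y) (hyB : ∑ j, y j ≤ ∑ i, B i)
    (huy : ∀ i, 0 < u i y) :
    ((Real.exp 1)⁻¹) ^ ((Real.exp 1)⁻¹) * (∏ i, u i y ^ B i) ^ (∑ i, B i)⁻¹ ≤
      (∏ i, u i x ^ B i) ^ (∑ i, B i)⁻¹ := by
  by_cases hn : n = 0
  · subst hn
    simp only [Finset.univ_eq_empty, Finset.prod_empty, Finset.sum_empty, inv_zero,
      Real.rpow_zero, mul_one]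
    exact Real.rpow_le_one (by positivity)
      (inv_le_one_of_one_le₀ (Real.one_le_exp zero_le_one)) (by positivity)
  haveI : Nonempty (Fin n) := ⟨⟨0, Nat.pos_of_ne_zero hn⟩⟩
  have hS : 0 < ∑ i, B i := Finset.sum_pos (fun i _ => hB i) Finset.univ_nonempty
  have hep : (0:ℝ) < Real.exp 1 := Real.exp_pos 1
  -- per agent key inequality
  have key : ∀ i, B i * (Real.log (u i y) - Real.log (u i x)) ≤
      (∑ j, p i j * y j) / Real.exp 1 := by
    intro i
    set c := ∑ j, p i j * y j with hc
    have hc0 : 0 ≤ c := Finset.sum_nonneg fun j _ => mul_nonneg (hp i j) (hy j)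
    by_cases hcB : c ≤ B i
    · have h1 : u i y ≤ u i x := hopt i y hy hcB
      have h2 : Real.log (u i y) ≤ Real.log (u i x) :=
        Real.log_le_log (huy i) h1
      nlinarith [(hB i).le, div_nonneg hc0 hep.le]
    · push_neg at hcB
      have hcpos : 0 < c := lt_trans (hB i) hcB
      set t := B i / c with ht
      have ht0 : 0 < t := div_pos (hB i) hcpos
      have ht1 : t < 1 := (div_lt_one hcpos).mpr hcB
      have hz : (0:Fin m → ℝ) ≤ t • y := fun j => mul_nonneg ht0.le (hy j)
      have hzB : ∑ j, p i j * (t • y) j ≤ B i := by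
        simp only [Pi.smul_apply, smul_eq_mul]
        have h : ∑ j, p i j * (t * y j) = t * c := by
          rw [hc, Finset.mul_sum]
          exact Finset.sum_congr rfl fun j _ => by ring
        rw [h, ht, div_mul_cancel₀ _ hcpos.ne']
      have hconc' : t * u i y ≤ u i (t • y) := by
        have h := (hconc i).2 (show y ∈ {v : Fin m → ℝ | 0 ≤ v} from hy)
          (show (0:Fin m → ℝ) ∈ {v : Fin m → ℝ | 0 ≤ v} from by exact le_refl (0 : Fin m → ℝ))
          (show (0:ℝ) ≤ t from ht0.le) (show (0:ℝ) ≤ 1 - t from by linarith)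
          (show t + (1 - t) = 1 from by ring)
        simpa [hu0 i, smul_eq_mul] using h
      have h1 : t * u i y ≤ u i x := hconc'.trans (hopt i _ hz hzB)
      have h2 : Real.log t + Real.log (u i y) ≤ Real.log (u i x) := by
        rw [← Real.log_mul ht0.ne' (huy i).ne']
        exact Real.log_le_log (mul_pos ht0 (huy i)) h1
      have hbe : (0:ℝ) < B i * Real.exp 1 := mul_pos (hB i) hep
      have h5 : Real.log (c / B i) = Real.log (c / (B i * Real.exp 1)) + 1 := by
        rw [div_mul_eq_div_div, Real.log_div (div_pos hcpos (hB i)).ne'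
          (Real.exp_ne_zero 1), Real.log_exp]
        ring
      have h6 : B i * Real.log (c / B i) ≤ c / Real.exp 1 := by
        have h4 : Real.log (c / (B i * Real.exp 1)) ≤ c / (B i * Real.exp 1) - 1 :=
          Real.log_le_sub_one_of_pos (div_pos hcpos hbe)
        have hbe2 : (B i * Real.exp 1) * (c / (B i * Real.exp 1)) = c := by
          field_simp
          exact div_self (hB i).ne'
        have h4' := mul_le_mul_of_nonneg_left h4 hbe.le
        rw [le_div_iff₀ hep, h5]
        nlinarith [h4', hbe2]
      have hlt : Real.log t = - Real.log (c / B i) := by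
        rw [ht, ← Real.log_inv, inv_div]
      have h7 : Real.log (u i y) - Real.log (u i x) ≤ Real.log (c / B i) := by
        rw [hlt] at h2
        linarith
      calc B i * (Real.log (u i y) - Real.log (u i x)) ≤ B i * Real.log (c / B i) :=
            mul_le_mul_of_nonneg_left h7 (hB i).le
        _ ≤ c / Real.exp 1 := h6
  -- total spending bound
  have hcs : ∑ i, ∑ j, p i j * y j ≤ ∑ i, B i := by
    rw [Finset.sum_comm]
    calc ∑ j, ∑ i, p i j * y j = ∑ j, (∑ i, p i j) * y j := by
          simp [Finset.sum_mul]
      _ ≤ ∑ j, y j := Finset.sum_le_sum fun j _ =>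
          mul_le_of_le_one_left (hy j) (hprice j)
      _ ≤ ∑ i, B i := hyB
  have hsum : ∑ i, B i * (Real.log (u i y) - Real.log (u i x)) ≤
      (∑ i, B i) / Real.exp 1 := by
    calc ∑ i, B i * (Real.log (u i y) - Real.log (u i x))
        ≤ ∑ i, (∑ j, p i j * y j) / Real.exp 1 := Finset.sum_le_sum fun i _ => key i
      _ = (∑ i, ∑ j, p i j * y j) / Real.exp 1 := by rw [← Finset.sum_div]
      _ ≤ (∑ i, B i) / Real.exp 1 := by gcongr
  -- positivity
  have hPx : 0 < ∏ i, u i x ^ B i :=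
    Finset.prod_pos fun i _ => Real.rpow_pos_of_pos (hux i) _
  have hPy : 0 < ∏ i, u i y ^ B i :=
    Finset.prod_pos fun i _ => Real.rpow_pos_of_pos (huy i) _
  have hL : 0 < ((Real.exp 1)⁻¹) ^ ((Real.exp 1)⁻¹) * (∏ i, u i y ^ B i) ^ (∑ i, B i)⁻¹ := by
    have := Real.rpow_pos_of_pos (inv_pos.mpr hep) ((Real.exp 1)⁻¹)
    have := Real.rpow_pos_of_pos hPy (∑ i, B i)⁻¹
    positivity
  have hR : 0 < (∏ i, u i x ^ B i) ^ (∑ i, B i)⁻¹ := Real.rpow_pos_of_pos hPx _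
  rw [← Real.log_le_log_iff hL hR]
  have hlogPx : Real.log (∏ i, u i x ^ B i) = ∑ i, B i * Real.log (u i x) := by
    rw [Real.log_prod fun i _ => (Real.rpow_pos_of_pos (hux i) _).ne']
    exact Finset.sum_congr rfl fun i _ => Real.log_rpow (hux i) _
  have hlogPy : Real.log (∏ i, u i y ^ B i) = ∑ i, B i * Real.log (u i y) := by
    rw [Real.log_prod fun i _ => (Real.rpow_pos_of_pos (huy i) _).ne']
    exact Finset.sum_congr rfl fun i _ => Real.log_rpow (huy i) _
  rw [Real.log_mul (Real.rpow_pos_of_pos (inv_pos.mpr hep) _).ne'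
      (Real.rpow_pos_of_pos hPy _).ne',
    Real.log_rpow (inv_pos.mpr hep), Real.log_rpow hPy, Real.log_rpow hPx,
    Real.log_inv, Real.log_exp, hlogPx, hlogPy]
  -- goal: e⁻¹ * (-1) + S⁻¹ * Σ B log uy ≤ S⁻¹ * Σ B log ux
  have hmul : (∑ i, B i)⁻¹ * (∑ i, B i * (Real.log (u i y) - Real.log (u i x))) ≤
      (∑ i, B i)⁻¹ * ((∑ i, B i) / Real.exp 1) :=
    mul_le_mul_of_nonneg_left hsum (inv_nonneg.mpr hS.le)
  have heq : (∑ i, B i)⁻¹ * ((∑ i, B i) / Real.exp 1) = (Real.exp 1)⁻¹ := by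
    field_simp
  have hsplit : ∑ i, B i * (Real.log (u i y) - Real.log (u i x)) =
      (∑ i, B i * Real.log (u i y)) - (∑ i, B i * Real.log (u i x)) := by
    rw [← Finset.sum_sub_distrib]
    exact Finset.sum_congr rfl fun i _ => by ring
  rw [heq, hsplit] at hmul
  nlinarith [hmul]
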